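/- Let C be a contextual CwF and A a closed type of C. Then the contextual slice C // (1.A), whose objects are telescopes over the extended context 1.A, is the free extension of C by a generic element q_A of type A: for every CwF E, CwF morphism F : C → E, and element a ∈ E.Tm(1_E, F(A)), there is a unique CwF morphism F̃ : C // (1.A) → E such that F̃ ∘ p_A* = F and F̃(q_A) = a. -/

import Mathlib

universe u

/-- A category with families (CwF): a category with a terminal object, presheaves of
types and terms, and context extension satisfying its universal property. -/
structure CwF where
  Ctx : Type (u + 1)
  Hom : Ctx → Ctx → Type u
  idh : ∀ Γ, Hom Γ Γ
  comp : ∀ {Γ Δ Θ : Ctx}, Hom Δ Θ → Hom Γ Δ → Hom Γ Θ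
  comp_id : ∀ {Γ Δ} (f : Hom Γ Δ), comp f (idh Γ) = f
  id_comp : ∀ {Γ Δ} (f : Hom Γ Δ), comp (idh Δ) f = f
  assoc : ∀ {Γ Δ Θ Ξ} (h : Hom Θ Ξ) (g : Hom Δ Θ) (f : Hom Γ Δ),
    comp (comp h g) f = comp h (comp g f)
  one : Ctx
  bang : ∀ Γ, Hom Γ one
  bang_uniq : ∀ {Γ} (f : Hom Γ one), f = bang Γ
  Ty : Ctx → Type u
  subT : ∀ {Γ Δ}, Ty Γ → Hom Δ Γ → Ty Δ
  subT_id : ∀ {Γ} (A : Ty Γ), subT A (idh Γ) = A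
  subT_comp : ∀ {Γ Δ Θ} (A : Ty Γ) (f : Hom Δ Γ) (g : Hom Θ Δ),
    subT A (comp f g) = subT (subT A f) g
  Tm : ∀ Γ, Ty Γ → Type u
  subt : ∀ {Γ Δ} {A : Ty Γ}, Tm Γ A → (f : Hom Δ Γ) → Tm Δ (subT A f)
  subt_id : ∀ {Γ} {A : Ty Γ} (a : Tm Γ A), HEq (subt a (idh Γ)) a
  subt_comp : ∀ {Γ Δ Θ} {A : Ty Γ} (a : Tm Γ A) (f : Hom Δ Γ) (g : Hom Θ Δ),
    HEq (subt a (comp f g)) (subt (subt a f) g)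
  ext : ∀ Γ, Ty Γ → Ctx
  pp : ∀ {Γ} {A : Ty Γ}, Hom (ext Γ A) Γ
  qq : ∀ {Γ} {A : Ty Γ}, Tm (ext Γ A) (subT A pp)
  pair : ∀ {Γ Δ} {A : Ty Γ} (f : Hom Δ Γ), Tm Δ (subT A f) → Hom Δ (ext Γ A)
  pp_pair : ∀ {Γ Δ} {A : Ty Γ} (f : Hom Δ Γ) (a : Tm Δ (subT A f)),
    comp pp (pair f a) = f
  qq_pair : ∀ {Γ Δ} {A : Ty Γ} (f : Hom Δ Γ) (a : Tm Δ (subT A f)),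
    HEq (subt qq (pair f a)) a
  pair_uniq : ∀ {Γ Δ} {A : Ty Γ} (h : Hom Δ (ext Γ A)),
    h = pair (comp pp h)
      (cast (congrArg (Tm Δ) (subT_comp A pp h).symm) (subt qq h))

/-- A morphism of CwFs: a functor strictly preserving the terminal object, types,
terms, substitution and context extensions. -/
structure CwFHom (M N : CwF.{u}) where
  ctx : M.Ctx → N.Ctx
  hom : ∀ {Γ Δ}, M.Hom Γ Δ → N.Hom (ctx Γ) (ctx Δ)
  hom_id : ∀ Γ, hom (M.idh Γ) = N.idh (ctx Γ)
  hom_comp : ∀ {Γ Δ Θ} (g : M.Hom Δ Θ) (f : M.Hom Γ Δ),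
    hom (M.comp g f) = N.comp (hom g) (hom f)
  ctx_one : ctx M.one = N.one
  ty : ∀ {Γ}, M.Ty Γ → N.Ty (ctx Γ)
  ty_sub : ∀ {Γ Δ} (A : M.Ty Γ) (f : M.Hom Δ Γ),
    ty (M.subT A f) = N.subT (ty A) (hom f)
  tm : ∀ {Γ} {A : M.Ty Γ}, M.Tm Γ A → N.Tm (ctx Γ) (ty A)
  tm_sub : ∀ {Γ Δ} {A : M.Ty Γ} (a : M.Tm Γ A) (f : M.Hom Δ Γ),
    HEq (tm (M.subt a f)) (N.subt (tm a) (hom f))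
  ctx_ext : ∀ {Γ} (A : M.Ty Γ), ctx (M.ext Γ A) = N.ext (ctx Γ) (ty A)
  hom_p : ∀ {Γ} (A : M.Ty Γ), HEq (hom (M.pp (A := A))) (N.pp (A := ty A))
  tm_q : ∀ {Γ} (A : M.Ty Γ), HEq (tm (M.qq (A := A))) (N.qq (A := ty A))

/-- Telescopes (iterated context extensions) over a context `Γ₀`, indexed by the
context they realize. -/
inductive TeleOver (M : CwF.{u}) (Γ₀ : M.Ctx) : M.Ctx → Type (u + 1)
  | nil : TeleOver M Γ₀ Γ₀
  | snoc {Δ} (t : TeleOver M Γ₀ Δ) (A : M.Ty Δ) : TeleOver M Γ₀ (M.ext Δ A)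

/-- A CwF is contextual if every context is uniquely an iterated context extension
of the empty context. -/
def Contextual (M : CwF.{u}) : Prop :=
  Function.Bijective (fun p : Σ Γ : M.Ctx, TeleOver M M.one Γ => p.1)

/-- The projection of a telescope to its base, a composite of the projections `p`. -/
def teleProj (M : CwF.{u}) {Γ₀ : M.Ctx} : ∀ {Δ}, TeleOver M Γ₀ Δ → M.Hom Δ Γ₀
  | _, .nil => M.idh Γ₀
  | _, .snoc t _ => M.comp (teleProj M t) M.pp

/-- The contextual slice `M // Γ₀`: its contexts are the telescopes over `Γ₀`, its
morphisms are the morphisms between their realizations lying over `Γ₀`, and the rest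
of the structure is inherited from `M`. -/
def sliceCwF (M : CwF.{u}) (Γ₀ : M.Ctx) : CwF.{u} where
  Ctx := Σ Δ : M.Ctx, TeleOver M Γ₀ Δ
  Hom X Y := {f : M.Hom X.1 Y.1 // M.comp (teleProj M Y.2) f = teleProj M X.2}
  idh X := ⟨M.idh X.1, M.comp_id _⟩
  comp g f := ⟨M.comp g.1 f.1, by rw [← M.assoc, g.2, f.2]⟩
  comp_id f := Subtype.ext (M.comp_id f.1)
  id_comp f := Subtype.ext (M.id_comp f.1)
  assoc h g f := Subtype.ext (M.assoc h.1 g.1 f.1)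
  one := ⟨Γ₀, TeleOver.nil⟩
  bang X := ⟨teleProj M X.2, M.id_comp _⟩
  bang_uniq f := Subtype.ext ((M.id_comp f.1).symm.trans f.2)
  Ty X := M.Ty X.1
  subT A f := M.subT A f.1
  subT_id A := M.subT_id A
  subT_comp A f g := M.subT_comp A f.1 g.1
  Tm X A := M.Tm X.1 A
  subt a f := M.subt a f.1
  subt_id a := M.subt_id a
  subt_comp a f g := M.subt_comp a f.1 g.1
  ext X A := ⟨M.ext X.1 A, X.2.snoc A⟩
  pp := ⟨M.pp, rfl⟩
  qq := M.qq
  pair f a := ⟨M.pair f.1 a, by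
    show M.comp (M.comp _ M.pp) _ = _
    rw [M.assoc, M.pp_pair, f.2]⟩
  pp_pair f a := Subtype.ext (M.pp_pair f.1 a)
  qq_pair f a := M.qq_pair f.1 a
  pair_uniq h := Subtype.ext (M.pair_uniq h.1)

namespace CwFFree

variable {N : CwF.{u}}

/-- The hom induced by an equality of contexts. -/
def eHom {X Y : N.Ctx} (h : X = Y) : N.Hom X Y := h ▸ N.idh X

@[simp] lemma eHom_rfl {X : N.Ctx} : eHom (rfl : X = X) = N.idh X := rfl

lemma eHom_self {X : N.Ctx} (h : X = X) : eHom h = N.idh X := rfl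

lemma comp_eHom {X Y Z : N.Ctx} (h : X = Y) (f : N.Hom Y Z) :
    HEq (N.comp f (eHom h)) f := by subst h; rw [eHom_rfl, N.comp_id]

lemma eHom_comp {X Y Z : N.Ctx} (h : Y = Z) (f : N.Hom X Y) :
    HEq (N.comp (eHom h) f) f := by subst h; rw [eHom_rfl, N.id_comp]

lemma eHom_eHom {X Y Z : N.Ctx} (h1 : X = Y) (h2 : Y = Z) :
    N.comp (eHom h2) (eHom h1) = eHom (h1.trans h2) := by
  subst h1; subst h2; rw [eHom_rfl, N.id_comp]

lemma eHom_cancel {X Y Z : N.Ctx} (h : Y = Z) {u v : N.Hom X Y}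
    (H : N.comp (eHom h) u = N.comp (eHom h) v) : u = v := by
  subst h; rwa [eHom_rfl, N.id_comp, N.id_comp] at H

lemma heq_of_eHom_comp {X X' Y Y' : N.Ctx} (h1 : X = X') (h2 : Y = Y')
    {u : N.Hom X Y} {v : N.Hom X' Y'}
    (H : N.comp (eHom h2) u = N.comp v (eHom h1)) : HEq u v := by
  subst h1; subst h2; rw [eHom_rfl, eHom_rfl, N.id_comp, N.comp_id] at H
  exact heq_of_eq H

lemma eHom_comp_eq_of_heq {X X' Y Y' : N.Ctx} (h1 : X = X') (h2 : Y = Y')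
    {u : N.Hom X Y} {v : N.Hom X' Y'} (H : HEq u v) :
    N.comp (eHom h2) u = N.comp v (eHom h1) := by
  subst h1; subst h2; rw [eHom_rfl, eHom_rfl, N.id_comp, N.comp_id]
  exact eq_of_heq H

lemma hom_one_eq {Z Y : N.Ctx} (h : Y = N.one) (u v : N.Hom Z Y) : u = v := by
  subst h; exact (N.bang_uniq u).trans (N.bang_uniq v).symm

lemma ext_congr {X X' : N.Ctx} (hX : X = X') {A : N.Ty X} {A' : N.Ty X'}
    (hA : HEq A A') : N.ext X A = N.ext X' A' := by
  subst hX; cases eq_of_heq hA; rfl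

lemma pp_congr {X X' : N.Ctx} (hX : X = X') {A : N.Ty X} {A' : N.Ty X'}
    (hA : HEq A A') : HEq (N.pp (A := A)) (N.pp (A := A')) := by
  subst hX; cases eq_of_heq hA; rfl

lemma qq_congr {X X' : N.Ctx} (hX : X = X') {A : N.Ty X} {A' : N.Ty X'}
    (hA : HEq A A') : HEq (N.qq (A := A)) (N.qq (A := A')) := by
  subst hX; cases eq_of_heq hA; rfl

lemma subT_hcongr {Γ Γ' Δ : N.Ctx} (hΓ : Γ = Γ') {A : N.Ty Γ} {A' : N.Ty Γ'}
    (hA : HEq A A') {f : N.Hom Δ Γ} {f' : N.Hom Δ Γ'} (hf : HEq f f') :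
    N.subT A f = N.subT A' f' := by
  subst hΓ; cases eq_of_heq hA; cases eq_of_heq hf; rfl

lemma subt_hcongr {Γ Γ' Δ : N.Ctx} (hΓ : Γ = Γ') {A : N.Ty Γ} {A' : N.Ty Γ'}
    (hA : HEq A A') {a : N.Tm Γ A} {a' : N.Tm Γ' A'} (ha : HEq a a')
    {f : N.Hom Δ Γ} {f' : N.Hom Δ Γ'} (hf : HEq f f') :
    HEq (N.subt a f) (N.subt a' f') := by
  subst hΓ; cases eq_of_heq hA; cases eq_of_heq ha; cases eq_of_heq hf; rfl

lemma subT_eHom {X Y : N.Ctx} (h : X = Y) (A : N.Ty Y) :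
    HEq (N.subT A (eHom h)) A := by
  subst h; rw [eHom_rfl, N.subT_id]

lemma subt_eHom {X Y : N.Ctx} (h : X = Y) {A : N.Ty Y} (a : N.Tm Y A) :
    HEq (N.subt a (eHom h)) a := by subst h; rw [eHom_rfl]; exact N.subt_id a

lemma pair_hcongr {Γ Δ : N.Ctx} {A : N.Ty Γ} {f g : N.Hom Δ Γ} (hfg : f = g)
    {a : N.Tm Δ (N.subT A f)} {b : N.Tm Δ (N.subT A g)} (hab : HEq a b) :
    N.pair f a = N.pair g b := by
  subst hfg; cases eq_of_heq hab; rfl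

/-- extensionality for maps into a context extension -/
lemma hom_ext {Γ Δ : N.Ctx} {A : N.Ty Γ} {f g : N.Hom Δ (N.ext Γ A)}
    (h1 : N.comp N.pp f = N.comp N.pp g)
    (h2 : HEq (N.subt N.qq f) (N.subt N.qq g)) : f = g := by
  rw [N.pair_uniq f, N.pair_uniq g]
  exact pair_hcongr h1 (((cast_heq _ _).trans h2).trans (cast_heq _ _).symm)

/-- composition with a pair -/
lemma comp_pair {Γ Δ Θ : N.Ctx} {A : N.Ty Γ} (f : N.Hom Δ Γ)
    (a : N.Tm Δ (N.subT A f)) (g : N.Hom Θ Δ) :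
    N.comp (N.pair f a) g
      = N.pair (N.comp f g) (cast (congrArg (N.Tm Θ) (N.subT_comp A f g).symm)
          (N.subt a g)) := by
  apply hom_ext
  · rw [← N.assoc, N.pp_pair, N.pp_pair]
  · refine ((N.subt_comp N.qq (N.pair f a) g).trans ?_).trans
      (N.qq_pair _ _).symm
    have hA : N.subT (N.subT A N.pp) (N.pair f a) = N.subT A f := by
      rw [← N.subT_comp, N.pp_pair]
    exact (subt_hcongr rfl (heq_of_eq hA)
      (N.qq_pair f a) (HEq.refl g)).trans (cast_heq _ _).symm

lemma subt_qq_comp {Γ Δ Θ : N.Ctx} {A : N.Ty Γ} (f : N.Hom Δ Γ)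
    (a : N.Tm Δ (N.subT A f)) (g : N.Hom Θ Δ) :
    HEq (N.subt N.qq (N.comp (N.pair f a) g)) (N.subt a g) := by
  rw [comp_pair]
  exact (N.qq_pair _ _).trans (cast_heq _ _)

end CwFFree
namespace CwFFree

variable {M : CwF.{u}}

/-- weakening data: a telescope over `Γ₀` together with its projection to `Γ`. -/
structure Wk (M : CwF.{u}) (Γ₀ Γ : M.Ctx) where
  car : M.Ctx
  tele : TeleOver M Γ₀ car
  proj : M.Hom car Γ

/-- weakening of a telescope over the empty context to a telescope over `Γ₀`. -/
def wk (Γ₀ : M.Ctx) : ∀ {Γ}, TeleOver M M.one Γ → Wk M Γ₀ Γ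
  | _, .nil => ⟨Γ₀, .nil, M.bang Γ₀⟩
  | _, .snoc T B =>
    let w := wk Γ₀ T
    ⟨M.ext w.car (M.subT B w.proj), w.tele.snoc _,
      M.pair (M.comp w.proj M.pp)
        (cast (congrArg (M.Tm _) (M.subT_comp B w.proj M.pp).symm) M.qq)⟩

lemma wk_pp_proj {Γ₀ Γ : M.Ctx} (T : TeleOver M M.one Γ) (B : M.Ty Γ) :
    M.comp M.pp (wk Γ₀ (T.snoc B)).proj = M.comp (wk Γ₀ T).proj M.pp :=
  M.pp_pair _ _

lemma wk_qq_proj {Γ₀ Γ : M.Ctx} (T : TeleOver M M.one Γ) (B : M.Ty Γ) :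
    HEq (M.subt M.qq (wk Γ₀ (T.snoc B)).proj)
      (M.qq (A := M.subT B (wk Γ₀ T).proj)) :=
  (M.qq_pair _ _).trans (cast_heq _ _)

/-- the universal property of the weakening: `wk T` is the product of `Γ₀` and `Γ`. -/
lemma mlift_exu {Γ₀ Γ : M.Ctx} (T : TeleOver M M.one Γ) {Z : M.Ctx}
    (g : M.Hom Z Γ) (h : M.Hom Z Γ₀) :
    ∃! l : M.Hom Z (wk Γ₀ T).car,
      M.comp (wk Γ₀ T).proj l = g ∧ M.comp (teleProj M (wk Γ₀ T).tele) l = h := by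
  induction T with
  | nil =>
    refine ⟨h, ⟨hom_one_eq rfl _ _, ?_⟩, ?_⟩
    · show M.comp (M.idh Γ₀) h = h
      rw [M.id_comp]
    · rintro l ⟨-, hl2⟩
      exact (M.id_comp l).symm.trans hl2
  | snoc T B IH =>
    obtain ⟨l₀, ⟨hp, ht⟩, hu⟩ := IH (M.comp M.pp g)
    have e : M.subT (M.subT B M.pp) g = M.subT (M.subT B (wk Γ₀ T).proj) l₀ := by
      rw [← M.subT_comp, ← M.subT_comp, hp]
    refine ⟨M.pair l₀ (cast (congrArg (M.Tm Z) e) (M.subt M.qq g)), ⟨?_, ?_⟩, ?_⟩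
    · apply hom_ext
      · erw [← M.assoc, wk_pp_proj, M.assoc, M.pp_pair, hp]
      · refine (M.subt_comp M.qq _ _).trans ?_
        have h1 : M.subT (M.subT B M.pp) (wk Γ₀ (T.snoc B)).proj
            = M.subT (M.subT B (wk Γ₀ T).proj) M.pp := by
          rw [← M.subT_comp, ← M.subT_comp, wk_pp_proj]; rfl
        refine (subt_hcongr rfl (heq_of_eq h1) (wk_qq_proj T B) (HEq.refl _)).trans ?_
        exact (M.qq_pair _ _).trans (cast_heq _ _)
    · show M.comp (M.comp (teleProj M (wk Γ₀ T).tele) M.pp) _ = h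
      rw [M.assoc, M.pp_pair, ht]
    · rintro l ⟨hl1, hl2⟩
      have hbase : M.comp (wk Γ₀ T).proj (M.comp M.pp l) = M.comp M.pp g ∧
          M.comp (teleProj M (wk Γ₀ T).tele) (M.comp M.pp l) = h := by
        constructor
        · erw [← M.assoc, ← wk_pp_proj T B, M.assoc, hl1]
        · show M.comp (teleProj M (wk Γ₀ T).tele) (M.comp M.pp l) = h
          erw [← M.assoc]; exact hl2
      have hb := hu _ hbase
      apply hom_ext
      · rw [M.pp_pair, hb]
      · refine HEq.trans ?_ ((M.qq_pair _ _).trans (cast_heq _ _)).symm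
        have h1 : M.subT (M.subT B M.pp) (wk Γ₀ (T.snoc B)).proj
            = M.subT (M.subT B (wk Γ₀ T).proj) M.pp := by
          rw [← M.subT_comp, ← M.subT_comp, wk_pp_proj]; rfl
        have := (subt_hcongr rfl (heq_of_eq h1) (wk_qq_proj T B)
          (HEq.refl l)).symm.trans (M.subt_comp M.qq (wk Γ₀ (T.snoc B)).proj l).symm
        -- this : HEq (M.subt M.qq l) (M.subt M.qq (M.comp proj l))
        rw [hl1] at this
        exact this

/-- the canonical telescope of a context in a contextual CwF -/
noncomputable def teleOf (hM : Contextual M) (Γ : M.Ctx) : TeleOver M M.one Γ :=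
  (hM.2 Γ).choose_spec ▸ (hM.2 Γ).choose.2

lemma teleOf_unique (hM : Contextual M) {Γ : M.Ctx} (t : TeleOver M M.one Γ) :
    t = teleOf hM Γ := by
  have := hM.1 (a₁ := ⟨Γ, t⟩) (a₂ := ⟨Γ, teleOf hM Γ⟩) rfl
  exact eq_of_heq (Sigma.ext_iff.mp this).2

end CwFFree
namespace CwFFree

variable {M : CwF.{u}}

noncomputable def mlift {Γ₀ Γ : M.Ctx} (T : TeleOver M M.one Γ) {Z : M.Ctx}
    (g : M.Hom Z Γ) (h : M.Hom Z Γ₀) : M.Hom Z (wk Γ₀ T).car :=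
  (mlift_exu T g h).choose

lemma mlift_proj {Γ₀ Γ : M.Ctx} (T : TeleOver M M.one Γ) {Z : M.Ctx}
    (g : M.Hom Z Γ) (h : M.Hom Z Γ₀) :
    M.comp (wk Γ₀ T).proj (mlift T g h) = g :=
  (mlift_exu T g h).choose_spec.1.1

lemma mlift_tele {Γ₀ Γ : M.Ctx} (T : TeleOver M M.one Γ) {Z : M.Ctx}
    (g : M.Hom Z Γ) (h : M.Hom Z Γ₀) :
    M.comp (teleProj M (wk Γ₀ T).tele) (mlift T g h) = h :=
  (mlift_exu T g h).choose_spec.1.2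

lemma mlift_eq {Γ₀ Γ : M.Ctx} (T : TeleOver M M.one Γ) {Z : M.Ctx}
    {g : M.Hom Z Γ} {h : M.Hom Z Γ₀} (l : M.Hom Z (wk Γ₀ T).car)
    (h1 : M.comp (wk Γ₀ T).proj l = g)
    (h2 : M.comp (teleProj M (wk Γ₀ T).tele) l = h) : l = mlift T g h :=
  (mlift_exu T g h).choose_spec.2 l ⟨h1, h2⟩

lemma teleOf_one (hM : Contextual M) : teleOf hM M.one = TeleOver.nil :=
  (teleOf_unique hM .nil).symm

lemma teleOf_ext (hM : Contextual M) (Γ : M.Ctx) (B : M.Ty Γ) :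
    teleOf hM (M.ext Γ B) = (teleOf hM Γ).snoc B :=
  (teleOf_unique hM _).symm

lemma slice_hom_heq {Γ₀ : M.Ctx} {X X' Y : (sliceCwF M Γ₀).Ctx} (hX : X = X')
    {f : (sliceCwF M Γ₀).Hom X Y} {g : (sliceCwF M Γ₀).Hom X' Y}
    (h : HEq f.1 g.1) : HEq f g := by
  subst hX; exact heq_of_eq (Subtype.ext (eq_of_heq h))

/-- The weakening morphism `M → M // Γ₀`. -/
noncomputable def W (hM : Contextual M) (Γ₀ : M.Ctx) :
    CwFHom M (sliceCwF M Γ₀) where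
  ctx Γ := ⟨(wk Γ₀ (teleOf hM Γ)).car, (wk Γ₀ (teleOf hM Γ)).tele⟩
  hom {Γ Δ} f :=
    ⟨mlift (teleOf hM Δ) (M.comp f (wk Γ₀ (teleOf hM Γ)).proj)
        (teleProj M (wk Γ₀ (teleOf hM Γ)).tele),
      mlift_tele _ _ _⟩
  hom_id Γ := by
    apply Subtype.ext
    refine (mlift_eq _ (M.idh _) ?_ ?_).symm
    · rw [M.comp_id, M.id_comp]
    · rw [M.comp_id]
  hom_comp {Γ Δ Θ} g f := by
    apply Subtype.ext
    refine (mlift_eq _ _ ?_ ?_).symm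
    · show M.comp (wk Γ₀ (teleOf hM Θ)).proj (M.comp _ _) = _
      rw [← M.assoc, mlift_proj, M.assoc, mlift_proj, ← M.assoc]
    · show M.comp (teleProj M (wk Γ₀ (teleOf hM Θ)).tele) (M.comp _ _) = _
      rw [← M.assoc, mlift_tele, mlift_tele]
  ctx_one := by
    show (⟨(wk Γ₀ (teleOf hM M.one)).car, (wk Γ₀ (teleOf hM M.one)).tele⟩ :
      (sliceCwF M Γ₀).Ctx) = _
    rw [teleOf_one hM]; rfl
  ty {Γ} B := M.subT B (wk Γ₀ (teleOf hM Γ)).proj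
  ty_sub {Γ Δ} B f := by
    show M.subT (M.subT B f) _ = M.subT (M.subT B _) _
    rw [← M.subT_comp, ← M.subT_comp, mlift_proj]
  tm {Γ} {B} b := M.subt b (wk Γ₀ (teleOf hM Γ)).proj
  tm_sub {Γ Δ} {B} b f := by
    show HEq (M.subt (M.subt b f) _) (M.subt (M.subt b _) _)
    refine ((M.subt_comp b f _).symm.trans ?_).trans (M.subt_comp b _ _)
    exact subt_hcongr rfl HEq.rfl HEq.rfl
      (heq_of_eq (mlift_proj (teleOf hM Γ) (M.comp f (wk Γ₀ (teleOf hM Δ)).proj)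
        (teleProj M (wk Γ₀ (teleOf hM Δ)).tele)).symm)
  ctx_ext {Γ} B := by
    show (⟨(wk Γ₀ (teleOf hM (M.ext Γ B))).car, (wk Γ₀ (teleOf hM (M.ext Γ B))).tele⟩ :
      (sliceCwF M Γ₀).Ctx) = _
    rw [teleOf_ext hM Γ B]; rfl
  hom_p {Γ} B := by
    refine slice_hom_heq ?_ ?_
    · show (⟨(wk Γ₀ (teleOf hM (M.ext Γ B))).car, (wk Γ₀ (teleOf hM (M.ext Γ B))).tele⟩ :
        (sliceCwF M Γ₀).Ctx) = _
      rw [teleOf_ext hM Γ B]; rfl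
    · show HEq (mlift (teleOf hM Γ) (M.comp M.pp (wk Γ₀ (teleOf hM (M.ext Γ B))).proj)
        (teleProj M (wk Γ₀ (teleOf hM (M.ext Γ B))).tele))
        (M.pp (A := M.subT B (wk Γ₀ (teleOf hM Γ)).proj))
      have key : ∀ (T' : TeleOver M M.one (M.ext Γ B)), T' = (teleOf hM Γ).snoc B →
          HEq (mlift (teleOf hM Γ) (M.comp M.pp (wk Γ₀ T').proj)
            (teleProj M (wk Γ₀ T').tele))
            (M.pp (A := M.subT B (wk Γ₀ (teleOf hM Γ)).proj)) := by
        rintro T' rfl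
        refine heq_of_eq (mlift_eq _ M.pp ?_ ?_).symm
        · exact (wk_pp_proj (teleOf hM Γ) B).symm
        · rfl
      exact key _ (teleOf_ext hM Γ B)
  tm_q {Γ} B := by
    show HEq (M.subt M.qq (wk Γ₀ (teleOf hM (M.ext Γ B))).proj)
      (M.qq (A := M.subT B (wk Γ₀ (teleOf hM Γ)).proj))
    have key : ∀ (T' : TeleOver M M.one (M.ext Γ B)), T' = (teleOf hM Γ).snoc B →
        HEq (M.subt M.qq (wk Γ₀ T').proj)
          (M.qq (A := M.subT B (wk Γ₀ (teleOf hM Γ)).proj)) := by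
      rintro T' rfl
      exact wk_qq_proj (teleOf hM Γ) B
    exact key _ (teleOf_ext hM Γ B)

end CwFFree
namespace CwFFree

section
variable {N : CwF.{u}}

lemma eHom_comp_cancel {X Y Z : N.Ctx} (h : X = Y) (f : N.Hom Z X) :
    N.comp (eHom h.symm) (N.comp (eHom h) f) = f := by
  subst h
  show N.comp (N.idh X) (N.comp (N.idh X) f) = f
  rw [N.id_comp, N.id_comp]

lemma eHom_comp_cancel' {X Y Z : N.Ctx} (h : X = Y) (f : N.Hom Z Y) :
    N.comp (eHom h) (N.comp (eHom h.symm) f) = f := by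
  subst h
  show N.comp (N.idh X) (N.comp (N.idh X) f) = f
  rw [N.id_comp, N.id_comp]

lemma subT_eHom_cast {X Y : N.Ctx} (h : X = Y) (A : N.Ty X) :
    N.subT A (eHom h.symm) = cast (congrArg N.Ty h) A := by
  subst h; rw [eHom_rfl, N.subT_id]; rfl

end

section
variable {N : CwF.{u}}
lemma master_aux {CD : N.Ctx} {BF : N.Ty CD} {CE : N.Ctx}
    (pF : N.Hom CE CD) (BpF : N.Ty CE) (qF : N.Tm CE BpF)
    (eC : CE = N.ext CD BF) (hp : HEq pF (N.pp (A := BF)))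
    (ht : BpF = N.subT BF pF) (hq : HEq qF (N.qq (A := BF))) :
    pF = N.comp N.pp (eHom eC) ∧
    BpF = N.subT (N.subT BF N.pp) (eHom eC) ∧
    HEq qF (N.subt N.qq (eHom eC)) := by
  subst eC
  cases eq_of_heq hp
  subst ht
  cases eq_of_heq hq
  refine ⟨?_, ?_, ?_⟩
  · rw [eHom_rfl, N.comp_id]
  · rw [eHom_rfl, N.subT_id]
  · rw [eHom_rfl]; exact (N.subt_id _).symm
end

variable {M E : CwF.{u}} (F : CwFHom M E)

lemma F_master {Δ₀ : M.Ctx} (B : M.Ty Δ₀) :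
    ∃ eC : F.ctx (M.ext Δ₀ B) = E.ext (F.ctx Δ₀) (F.ty B),
      F.hom (M.pp (A := B)) = E.comp E.pp (eHom eC) ∧
      F.ty (M.subT B M.pp) = E.subT (E.subT (F.ty B) E.pp) (eHom eC) ∧
      HEq (F.tm (M.qq (A := B))) (E.subt E.qq (eHom eC)) :=
  ⟨F.ctx_ext B, master_aux _ _ _ _ (F.hom_p B) (F.ty_sub B M.pp) (F.tm_q B)⟩

lemma F_pp_eq {Δ₀ : M.Ctx} (B : M.Ty Δ₀) :
    F.hom (M.pp (A := B)) = E.comp E.pp (eHom (F.ctx_ext B)) :=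
  (F_master F B).choose_spec.1

lemma F_ty_eq {Δ₀ : M.Ctx} (B : M.Ty Δ₀) :
    F.ty (M.subT B M.pp) = E.subT (E.subT (F.ty B) E.pp) (eHom (F.ctx_ext B)) :=
  (F_master F B).choose_spec.2.1

lemma F_qq_heq {Δ₀ : M.Ctx} (B : M.Ty Δ₀) :
    HEq (F.tm (M.qq (A := B))) (E.subt E.qq (eHom (F.ctx_ext B))) :=
  (F_master F B).choose_spec.2.2

lemma F_hom_ext {Δ₀ : M.Ctx} {B : M.Ty Δ₀} {Z : E.Ctx}
    {f₁ f₂ : E.Hom Z (F.ctx (M.ext Δ₀ B))}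
    (h1 : E.comp (F.hom (M.pp (A := B))) f₁ = E.comp (F.hom (M.pp (A := B))) f₂)
    (h2 : HEq (E.subt (F.tm (M.qq (A := B))) f₁)
      (E.subt (F.tm (M.qq (A := B))) f₂)) : f₁ = f₂ := by
  apply eHom_cancel (F.ctx_ext B)
  apply hom_ext
  · rw [← E.assoc, ← E.assoc, ← F_pp_eq]; exact h1
  · have key : ∀ (f : E.Hom Z (F.ctx (M.ext Δ₀ B))),
        HEq (E.subt E.qq (E.comp (eHom (F.ctx_ext B)) f))
          (E.subt (F.tm (M.qq (A := B))) f) := by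
      intro f
      refine ((E.subt_comp E.qq _ f).trans ?_)
      exact subt_hcongr rfl (heq_of_eq (F_ty_eq F B).symm) (F_qq_heq F B).symm HEq.rfl
    exact ((key f₁).trans h2).trans (key f₂).symm

lemma F_pair_ex {Δ₀ : M.Ctx} (B : M.Ty Δ₀) {Z : E.Ctx}
    (g' : E.Hom Z (F.ctx Δ₀)) (b' : E.Tm Z (E.subT (F.ty B) g')) :
    ∃ g : E.Hom Z (F.ctx (M.ext Δ₀ B)),
      E.comp (F.hom (M.pp (A := B))) g = g' ∧
      HEq (E.subt (F.tm (M.qq (A := B))) g) b' := by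
  refine ⟨E.comp (eHom (F.ctx_ext B).symm) (E.pair g' b'), ?_, ?_⟩
  · rw [F_pp_eq, E.assoc, eHom_comp_cancel', E.pp_pair]
  · have e1 : HEq (E.subt (F.tm (M.qq (A := B)))
        (E.comp (eHom (F.ctx_ext B).symm) (E.pair g' b')))
        (E.subt E.qq (E.comp (eHom (F.ctx_ext B))
          (E.comp (eHom (F.ctx_ext B).symm) (E.pair g' b')))) := by
      refine HEq.trans ?_ (E.subt_comp E.qq _ _).symm
      exact subt_hcongr rfl (heq_of_eq (F_ty_eq F B)) (F_qq_heq F B) HEq.rfl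
    rw [eHom_comp_cancel'] at e1
    exact e1.trans (E.qq_pair g' b')

lemma exists_aPt (A : M.Ty M.one)
    (a : E.Tm E.one (cast (congrArg E.Ty F.ctx_one) (F.ty A))) :
    ∃ z : E.Hom E.one (F.ctx (M.ext M.one A)),
      HEq (E.subt (F.tm (M.qq (A := A))) z) a ∧
      ∀ z', HEq (E.subt (F.tm (M.qq (A := A))) z') a → z' = z := by
  obtain ⟨z, hz1, hz2⟩ := F_pair_ex F A (eHom F.ctx_one.symm)
    (cast (congrArg (E.Tm E.one) (subT_eHom_cast F.ctx_one (F.ty A)).symm) a)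
  refine ⟨z, hz2.trans (cast_heq _ _), ?_⟩
  intro z' h'
  refine F_hom_ext F (hom_one_eq F.ctx_one _ _) ?_
  exact (h'.trans (cast_heq _ _).symm).trans hz2.symm

end CwFFree
namespace CwFFree

variable {M E : CwF.{u}} (F : CwFHom M E) {Γ₀ : M.Ctx}
  (aPt : E.Hom E.one (F.ctx Γ₀))

/-- interpretation of a telescope over `Γ₀` in `E`, substituting `aPt` for the base,
together with its realization morphism. -/
noncomputable def objReal : ∀ {Δ}, TeleOver M Γ₀ Δ → Σ' C : E.Ctx, E.Hom C (F.ctx Δ)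
  | _, .nil => ⟨E.one, aPt⟩
  | _, .snoc t B =>
    let w := objReal t
    ⟨E.ext w.1 (E.subT (F.ty B) w.2),
      (F_pair_ex F B (E.comp w.2 E.pp)
        (cast (congrArg (E.Tm _) (E.subT_comp (F.ty B) w.2 E.pp).symm) E.qq)).choose⟩

noncomputable def obj {Δ} (t : TeleOver M Γ₀ Δ) : E.Ctx := (objReal F aPt t).1

noncomputable def real {Δ} (t : TeleOver M Γ₀ Δ) : E.Hom (obj F aPt t) (F.ctx Δ) :=
  (objReal F aPt t).2

lemma real_pp {Δ} (t : TeleOver M Γ₀ Δ) (B : M.Ty Δ) :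
    E.comp (F.hom (M.pp (A := B))) (real F aPt (t.snoc B))
      = E.comp (real F aPt t) E.pp :=
  (F_pair_ex F B (E.comp (real F aPt t) E.pp)
    (cast (congrArg (E.Tm _) (E.subT_comp (F.ty B) (real F aPt t) E.pp).symm)
      E.qq)).choose_spec.1

lemma real_qq {Δ} (t : TeleOver M Γ₀ Δ) (B : M.Ty Δ) :
    HEq (E.subt (F.tm (M.qq (A := B))) (real F aPt (t.snoc B)))
      (E.qq (A := E.subT (F.ty B) (real F aPt t))) :=
  ((F_pair_ex F B (E.comp (real F aPt t) E.pp)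
    (cast (congrArg (E.Tm _) (E.subT_comp (F.ty B) (real F aPt t) E.pp).symm)
      E.qq)).choose_spec.2).trans (cast_heq _ _)

lemma real_ty {Δ} (t : TeleOver M Γ₀ Δ) (B : M.Ty Δ) :
    E.subT (F.ty (M.subT B M.pp)) (real F aPt (t.snoc B))
      = E.subT (E.subT (F.ty B) (real F aPt t)) E.pp := by
  erw [F.ty_sub, ← E.subT_comp, real_pp, E.subT_comp]; rfl

lemma proj_real {Δ} (t : TeleOver M Γ₀ Δ) :
    E.comp (F.hom (teleProj M t)) (real F aPt t) = E.comp aPt (E.bang _) := by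
  induction t with
  | nil =>
    show E.comp (F.hom (M.idh Γ₀)) aPt = E.comp aPt (E.bang E.one)
    rw [F.hom_id, E.id_comp, ← E.bang_uniq (E.idh E.one), E.comp_id]
  | snoc t B IH =>
    show E.comp (F.hom (M.comp (teleProj M t) M.pp)) _ = _
    erw [F.hom_comp, E.assoc, real_pp, ← E.assoc, IH, E.assoc]
    exact congrArg (E.comp aPt) (E.bang_uniq _)

lemma real_mono {Δ} (t : TeleOver M Γ₀ Δ) : ∀ {Z : E.Ctx}
    {u v : E.Hom Z (obj F aPt t)},
    E.comp (real F aPt t) u = E.comp (real F aPt t) v → u = v := by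
  induction t with
  | nil => exact fun _ => hom_one_eq rfl _ _
  | snoc t B IH =>
    intro Z u v H
    have hcomp : ∀ w : E.Hom Z (obj F aPt (t.snoc B)),
        HEq (E.subt (F.tm (M.qq (A := B))) (E.comp (real F aPt (t.snoc B)) w))
          (E.subt (E.qq (A := E.subT (F.ty B) (real F aPt t))) w) := by
      intro w
      refine (E.subt_comp _ _ _).trans ?_
      exact subt_hcongr rfl (heq_of_eq (real_ty F aPt t B)) (real_qq F aPt t B)
        HEq.rfl
    apply hom_ext
    · apply IH
      erw [← E.assoc, ← real_pp, E.assoc, H, ← E.assoc, real_pp, E.assoc]; rfl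
    · have := subt_hcongr (N := E) rfl HEq.rfl
        (HEq.refl (F.tm (M.qq (A := B)))) (heq_of_eq H)
      exact ((hcomp u).symm.trans this).trans (hcomp v)

lemma elift_ex {Δ} (t : TeleOver M Γ₀ Δ) : ∀ {Z : E.Ctx}
    (g : E.Hom Z (F.ctx Δ)),
    E.comp (F.hom (teleProj M t)) g = E.comp aPt (E.bang Z) →
    ∃ l : E.Hom Z (obj F aPt t), E.comp (real F aPt t) l = g := by
  induction t with
  | nil =>
    intro Z g hg
    refine ⟨E.bang Z, ?_⟩
    have : E.comp (F.hom (M.idh Γ₀)) g = E.comp aPt (E.bang Z) := hg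
    rw [F.hom_id, E.id_comp] at this
    exact this.symm
  | snoc t B IH =>
    intro Z g hg
    have hg₀ : E.comp (F.hom (teleProj M t)) (E.comp (F.hom (M.pp (A := B))) g)
        = E.comp aPt (E.bang Z) := by
      rw [← E.assoc, ← F.hom_comp]; exact hg
    obtain ⟨l₀, hl₀⟩ := IH (E.comp (F.hom (M.pp (A := B))) g) hg₀
    have e : E.subT (F.ty (M.subT B M.pp)) g
        = E.subT (E.subT (F.ty B) (real F aPt t)) l₀ := by
      rw [F.ty_sub, ← E.subT_comp, ← hl₀, E.subT_comp]
    refine ⟨E.pair l₀ (cast (congrArg (E.Tm Z) e) (E.subt (F.tm (M.qq (A := B))) g)),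
      ?_⟩
    apply F_hom_ext F
    · erw [← E.assoc, real_pp, E.assoc, E.pp_pair, hl₀]
    · have hcomp : HEq (E.subt (F.tm (M.qq (A := B)))
          (E.comp (real F aPt (t.snoc B)) (E.pair l₀
            (cast (congrArg (E.Tm Z) e) (E.subt (F.tm (M.qq (A := B))) g)))))
          (E.subt (E.qq (A := E.subT (F.ty B) (real F aPt t))) (E.pair l₀
            (cast (congrArg (E.Tm Z) e) (E.subt (F.tm (M.qq (A := B))) g)))) := by
        refine (E.subt_comp _ _ _).trans ?_
        exact subt_hcongr rfl (heq_of_eq (real_ty F aPt t B)) (real_qq F aPt t B)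
          HEq.rfl
      exact (hcomp.trans (E.qq_pair _ _)).trans (cast_heq _ _)

end CwFFree
namespace CwFFree

variable {M E : CwF.{u}} (F : CwFHom M E) {Γ₀ : M.Ctx}
  (aPt : E.Hom E.one (F.ctx Γ₀))

lemma Ft_side {X Y : (sliceCwF M Γ₀).Ctx} (f : (sliceCwF M Γ₀).Hom X Y) :
    E.comp (F.hom (teleProj M Y.2)) (E.comp (F.hom f.1) (real F aPt X.2))
      = E.comp aPt (E.bang _) := by
  rw [← E.assoc, ← F.hom_comp, f.2, proj_real]

noncomputable def FtHom {X Y : (sliceCwF M Γ₀).Ctx} (f : (sliceCwF M Γ₀).Hom X Y) :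
    E.Hom (obj F aPt X.2) (obj F aPt Y.2) :=
  (elift_ex F aPt Y.2 (E.comp (F.hom f.1) (real F aPt X.2)) (Ft_side F aPt f)).choose

lemma FtHom_spec {X Y : (sliceCwF M Γ₀).Ctx} (f : (sliceCwF M Γ₀).Hom X Y) :
    E.comp (real F aPt Y.2) (FtHom F aPt f) = E.comp (F.hom f.1) (real F aPt X.2) :=
  (elift_ex F aPt Y.2 (E.comp (F.hom f.1) (real F aPt X.2)) (Ft_side F aPt f)).choose_spec

/-- The induced morphism out of the slice. -/
noncomputable def Ft : CwFHom (sliceCwF M Γ₀) E where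
  ctx X := obj F aPt X.2
  hom f := FtHom F aPt f
  hom_id X := by
    apply real_mono F aPt X.2
    rw [FtHom_spec, E.comp_id]
    show E.comp (F.hom (M.idh X.1)) _ = _
    rw [F.hom_id, E.id_comp]
  hom_comp {X Y Z} g f := by
    apply real_mono F aPt Z.2
    rw [FtHom_spec, ← E.assoc, FtHom_spec, E.assoc, FtHom_spec, ← E.assoc,
      ← F.hom_comp]
    rfl
  ctx_one := rfl
  ty {X} B := E.subT (F.ty B) (real F aPt X.2)
  ty_sub {X Y} B f := by
    show E.subT (F.ty (M.subT B f.1)) _ = _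
    erw [F.ty_sub, ← E.subT_comp, ← FtHom_spec, E.subT_comp]
  tm {X} {B} b := E.subt (F.tm b) (real F aPt X.2)
  tm_sub {X Y} {B} b f := by
    show HEq (E.subt (F.tm (M.subt b f.1)) (real F aPt Y.2))
      (E.subt (E.subt (F.tm b) (real F aPt X.2)) (FtHom F aPt f))
    refine (subt_hcongr rfl (heq_of_eq (F.ty_sub B f.1)) (F.tm_sub b f.1)
      HEq.rfl).trans ?_
    refine ((E.subt_comp (F.tm b) (F.hom f.1) (real F aPt Y.2)).symm.trans
      ?_).trans (E.subt_comp (F.tm b) (real F aPt X.2) (FtHom F aPt f))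
    exact subt_hcongr rfl HEq.rfl HEq.rfl (heq_of_eq (FtHom_spec F aPt f).symm)
  ctx_ext {X} B := rfl
  hom_p {X} B := by
    refine heq_of_eq (real_mono F aPt X.2 ?_)
    have h1 : E.comp (real F aPt X.2) (FtHom F aPt ((sliceCwF M Γ₀).pp (A := B)))
        = E.comp (F.hom (M.pp (A := B))) (real F aPt (X.2.snoc B)) :=
      FtHom_spec F aPt ((sliceCwF M Γ₀).pp (A := B))
    erw [h1, real_pp]; rfl
  tm_q {X} B :=
    real_qq F aPt X.2 B

end CwFFree
namespace CwFFree

variable {M E : CwF.{u}} (F : CwFHom M E) {Γ₀ : M.Ctx}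
  (aPt : E.Hom E.one (F.ctx Γ₀))

lemma F_tm_hcongr {Γ : M.Ctx} {A A' : M.Ty Γ} (h : A = A') {a : M.Tm Γ A}
    {a' : M.Tm Γ A'} (ha : HEq a a') : HEq (F.tm a) (F.tm a') := by
  subst h; cases eq_of_heq ha; rfl

lemma wk_obj_real {Γ : M.Ctx} (T : TeleOver M M.one Γ) :
    ∃ h : obj F aPt (wk Γ₀ T).tele = F.ctx Γ,
      E.comp (F.hom (wk Γ₀ T).proj) (real F aPt (wk Γ₀ T).tele) = eHom h := by
  induction T with
  | nil => exact ⟨F.ctx_one.symm, hom_one_eq F.ctx_one _ _⟩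
  | @snoc Δ T B IH =>
    obtain ⟨h, hr⟩ := IH
    have hB : HEq (E.subT (F.ty (M.subT B (wk Γ₀ T).proj))
        (real F aPt (wk Γ₀ T).tele)) (F.ty B) := by
      refine (heq_of_eq ?_).trans (subT_eHom h (F.ty B))
      rw [F.ty_sub, ← E.subT_comp, hr]
    have h' : obj F aPt (wk Γ₀ (T.snoc B)).tele = F.ctx (M.ext Δ B) :=
      (ext_congr h hB).trans (F.ctx_ext B).symm
    refine ⟨h', ?_⟩
    apply F_hom_ext F (B := B)
    · erw [← E.assoc, ← F.hom_comp, wk_pp_proj, F.hom_comp, E.assoc]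
      have hrp : E.comp (F.hom (M.pp (A := M.subT B (wk Γ₀ T).proj)))
          (real F aPt (wk Γ₀ (T.snoc B)).tele)
          = E.comp (real F aPt (wk Γ₀ T).tele) E.pp :=
        real_pp F aPt (wk Γ₀ T).tele (M.subT B (wk Γ₀ T).proj)
      erw [hrp, ← E.assoc, hr, F_pp_eq, E.assoc, eHom_eHom]
      exact eq_of_heq (((eHom_comp h E.pp).trans (pp_congr h hB)).trans
        (comp_eHom (h'.trans (F.ctx_ext B)) E.pp).symm)
    · have htype : M.subT (M.subT B M.pp) (wk Γ₀ (T.snoc B)).proj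
          = M.subT (M.subT B (wk Γ₀ T).proj) M.pp := by
        rw [← M.subT_comp, ← M.subT_comp, wk_pp_proj]; rfl
      have hA : E.subT (F.ty (M.subT B M.pp)) (F.hom (wk Γ₀ (T.snoc B)).proj)
          = F.ty (M.subT (M.subT B (wk Γ₀ T).proj) M.pp) := by
        rw [← F.ty_sub, htype]; rfl
      have hqq' : HEq (E.qq (A := F.ty B)) (F.tm (M.qq (A := B))) :=
        ((F_qq_heq F B).trans (subt_eHom (F.ctx_ext B) E.qq)).symm
      refine HEq.trans ?_ (subt_eHom h' (F.tm (M.qq (A := B)))).symm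
      refine (E.subt_comp _ _ _).trans ?_
      refine HEq.trans (subt_hcongr rfl (heq_of_eq hA)
        ((F.tm_sub M.qq (wk Γ₀ (T.snoc B)).proj).symm.trans
          (F_tm_hcongr F htype (wk_qq_proj T B))) HEq.rfl) ?_
      refine (real_qq F aPt (wk Γ₀ T).tele (M.subT B (wk Γ₀ T).proj)).trans ?_
      exact (qq_congr h hB).trans hqq'

end CwFFree
namespace CwFFree

section eHomExtra
variable {N : CwF.{u}}

lemma subT_eHom_comp {X Y Y' : N.Ctx} (h : Y = Y') {A : N.Ty Y} {A' : N.Ty Y'}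
    (hA : HEq A A') (g : N.Hom X Y) :
    N.subT A g = N.subT A' (N.comp (eHom h) g) := by
  subst h; cases eq_of_heq hA
  rw [show N.comp (eHom rfl) g = g from by rw [eHom_rfl, N.id_comp]]

lemma subt_eHom_comp {X Y Y' : N.Ctx} (h : Y = Y') {A : N.Ty Y} {A' : N.Ty Y'}
    (hA : HEq A A') {a : N.Tm Y A} {a' : N.Tm Y' A'} (ha : HEq a a')
    (g : N.Hom X Y) : HEq (N.subt a g) (N.subt a' (N.comp (eHom h) g)) := by
  subst h; cases eq_of_heq hA; cases eq_of_heq ha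
  exact subt_hcongr rfl HEq.rfl HEq.rfl
    (heq_of_eq (show N.comp (eHom rfl) g = g by rw [eHom_rfl, N.id_comp]).symm)

lemma subt_comp_eHom_right {X X' Y : N.Ctx} (h : X' = X) (g : N.Hom X Y)
    {A : N.Ty Y} (x : N.Tm Y A) :
    HEq (N.subt x (N.comp g (eHom h))) (N.subt x g) := by
  subst h
  exact subt_hcongr rfl HEq.rfl HEq.rfl
    (heq_of_eq (show N.comp g (eHom rfl) = g by rw [eHom_rfl, N.comp_id]))

lemma eq_comp_eHom {X X' Y : N.Ctx} (h : X = X') {u : N.Hom X Y}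
    {v : N.Hom X' Y} (H : HEq u v) : u = N.comp v (eHom h) := by
  subst h; rw [eHom_rfl, N.comp_id]; exact eq_of_heq H

lemma comp_eHom_symm_cancel {X Y Z : N.Ctx} (h : X = Y) (f : N.Hom X Z) :
    N.comp (N.comp f (eHom h.symm)) (eHom h) = f := by
  subst h
  show N.comp (N.comp f (N.idh X)) (N.idh X) = f
  rw [N.comp_id, N.comp_id]

end eHomExtra

lemma Hom_tm_hcongr {P Q : CwF.{u}} (H : CwFHom P Q) {Γ : P.Ctx}
    {A A' : P.Ty Γ} (h : A = A') {a : P.Tm Γ A} {a' : P.Tm Γ A'}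
    (ha : HEq a a') : HEq (H.tm a) (H.tm a') := by
  subst h; cases eq_of_heq ha; rfl

lemma CwFHom_ext {P Q : CwF.{u}} {G H : CwFHom P Q}
    (hc : ∀ X, G.ctx X = H.ctx X)
    (hh : ∀ (X Y : P.Ctx) (f : P.Hom X Y), HEq (G.hom f) (H.hom f))
    (ht : ∀ (X : P.Ctx) (B : P.Ty X), HEq (G.ty B) (H.ty B))
    (hm : ∀ (X : P.Ctx) (B : P.Ty X) (b : P.Tm X B), HEq (G.tm b) (H.tm b)) :
    G = H := by
  obtain ⟨gc, gh, _, _, _, gt, _, gm, _, _, _, _⟩ := G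
  obtain ⟨hc', hh', _, _, _, ht', _, hm', _, _, _, _⟩ := H
  obtain rfl : gc = hc' := funext hc
  obtain rfl : @gh = @hh' := by funext X Y f; exact eq_of_heq (hh X Y f)
  obtain rfl : @gt = @ht' := by funext X B; exact eq_of_heq (ht X B)
  obtain rfl : @gm = @hm' := by funext X B b; exact eq_of_heq (hm X B b)
  rfl

variable {M E : CwF.{u}} (F : CwFHom M E) (hM : Contextual M) {Γ₀ : M.Ctx}

/-- comparison map from a telescope to the weakening of its realization -/
noncomputable def eps (Γ₀ : M.Ctx) (X : (sliceCwF M Γ₀).Ctx) :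
    (sliceCwF M Γ₀).Hom X ((W hM Γ₀).ctx X.1) :=
  ⟨mlift (teleOf hM X.1) (M.idh X.1) (teleProj M X.2), mlift_tele _ _ _⟩

lemma eps_val_proj (X : (sliceCwF M Γ₀).Ctx) :
    M.comp (wk Γ₀ (teleOf hM X.1)).proj (eps hM Γ₀ X).1 = M.idh X.1 :=
  mlift_proj _ _ _

lemma eps_val_tele (X : (sliceCwF M Γ₀).Ctx) :
    M.comp (teleProj M (wk Γ₀ (teleOf hM X.1)).tele) (eps hM Γ₀ X).1
      = teleProj M X.2 :=
  mlift_tele _ _ _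

lemma W_hom_val_proj {Γ Δ : M.Ctx} (f : M.Hom Γ Δ) :
    M.comp (wk Γ₀ (teleOf hM Δ)).proj ((W hM Γ₀).hom f).1
      = M.comp f (wk Γ₀ (teleOf hM Γ)).proj :=
  mlift_proj _ _ _

lemma W_hom_val_tele {Γ Δ : M.Ctx} (f : M.Hom Γ Δ) :
    M.comp (teleProj M (wk Γ₀ (teleOf hM Δ)).tele) ((W hM Γ₀).hom f).1
      = teleProj M (wk Γ₀ (teleOf hM Γ)).tele :=
  mlift_tele _ _ _

lemma eps_nat {X Y : (sliceCwF M Γ₀).Ctx} (f : (sliceCwF M Γ₀).Hom X Y) :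
    (sliceCwF M Γ₀).comp (eps hM Γ₀ Y) f
      = (sliceCwF M Γ₀).comp ((W hM Γ₀).hom f.1) (eps hM Γ₀ X) := by
  apply Subtype.ext
  show M.comp (eps hM Γ₀ Y).1 f.1 = M.comp ((W hM Γ₀).hom f.1).1 (eps hM Γ₀ X).1
  refine (mlift_eq (teleOf hM Y.1) (g := f.1) (h := teleProj M X.2) _ ?_ ?_).trans
    (mlift_eq (teleOf hM Y.1) _ ?_ ?_).symm
  · erw [← M.assoc, eps_val_proj, M.id_comp]
  · erw [← M.assoc, eps_val_tele]; exact f.2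
  · erw [← M.assoc, W_hom_val_proj, M.assoc, eps_val_proj, M.comp_id]
  · erw [← M.assoc, W_hom_val_tele, eps_val_tele]

variable (Γ₀) in
/-- realization of a `G`-image inside `F` -/
noncomputable def rho (G : CwFHom (sliceCwF M Γ₀) E)
    (hGctx : ∀ Γ, G.ctx ((W hM Γ₀).ctx Γ) = F.ctx Γ)
    (X : (sliceCwF M Γ₀).Ctx) : E.Hom (G.ctx X) (F.ctx X.1) :=
  E.comp (eHom (hGctx X.1)) (G.hom (eps hM Γ₀ X))

section G
variable (G : CwFHom (sliceCwF M Γ₀) E)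
  (hGctx : ∀ Γ, G.ctx ((W hM Γ₀).ctx Γ) = F.ctx Γ)

lemma sub_eps_ty (X : (sliceCwF M Γ₀).Ctx) (B : M.Ty X.1) :
    (sliceCwF M Γ₀).subT ((W hM Γ₀).ty B) (eps hM Γ₀ X) = B := by
  show M.subT (M.subT B (wk Γ₀ (teleOf hM X.1)).proj) (eps hM Γ₀ X).1 = B
  erw [← M.subT_comp, eps_val_proj, M.subT_id]

lemma sub_eps_tm (X : (sliceCwF M Γ₀).Ctx) {B : M.Ty X.1} (b : M.Tm X.1 B) :
    HEq ((sliceCwF M Γ₀).subt ((W hM Γ₀).tm b) (eps hM Γ₀ X)) b := by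
  show HEq (M.subt (M.subt b (wk Γ₀ (teleOf hM X.1)).proj) (eps hM Γ₀ X).1) b
  refine ((M.subt_comp b _ _).symm.trans ?_)
  refine HEq.trans (subt_hcongr rfl HEq.rfl HEq.rfl
    (heq_of_eq (eps_val_proj hM X))) (M.subt_id b)

lemma Gty_eq (hGty : ∀ Γ (B : M.Ty Γ), HEq (G.ty ((W hM Γ₀).ty B)) (F.ty B))
    (X : (sliceCwF M Γ₀).Ctx) (B : M.Ty X.1) :
    G.ty (Γ := X) B = E.subT (F.ty B) (rho F hM Γ₀ G hGctx X) := by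
  have h1 : G.ty (Γ := X) B
      = G.ty ((sliceCwF M Γ₀).subT ((W hM Γ₀).ty B) (eps hM Γ₀ X)) :=
    congrArg (fun B' => G.ty (Γ := X) B') (sub_eps_ty hM X B).symm
  rw [h1, G.ty_sub]
  exact subT_eHom_comp (hGctx X.1) (hGty X.1 B) (G.hom (eps hM Γ₀ X))

lemma Gtm_heq (hGty : ∀ Γ (B : M.Ty Γ), HEq (G.ty ((W hM Γ₀).ty B)) (F.ty B))
    (hGtm : ∀ Γ (B : M.Ty Γ) (b : M.Tm Γ B),
      HEq (G.tm ((W hM Γ₀).tm b)) (F.tm b))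
    (X : (sliceCwF M Γ₀).Ctx) {B : M.Ty X.1} (b : M.Tm X.1 B) :
    HEq (G.tm (Γ := X) b) (E.subt (F.tm b) (rho F hM Γ₀ G hGctx X)) := by
  refine HEq.trans (Hom_tm_hcongr G (sub_eps_ty hM X B).symm
    (sub_eps_tm hM X b).symm) ?_
  refine (G.tm_sub ((W hM Γ₀).tm b) (eps hM Γ₀ X)).trans ?_
  exact subt_eHom_comp (hGctx X.1) (hGty X.1 B) (hGtm X.1 B b)
    (G.hom (eps hM Γ₀ X))

lemma rho_nat (hGhom : ∀ Γ Δ (f : M.Hom Γ Δ),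
      HEq (G.hom ((W hM Γ₀).hom f)) (F.hom f))
    {X Y : (sliceCwF M Γ₀).Ctx} (f : (sliceCwF M Γ₀).Hom X Y) :
    E.comp (rho F hM Γ₀ G hGctx Y) (G.hom f)
      = E.comp (F.hom f.1) (rho F hM Γ₀ G hGctx X) := by
  show E.comp (E.comp (eHom (hGctx Y.1)) (G.hom (eps hM Γ₀ Y))) (G.hom f) = _
  rw [E.assoc, ← G.hom_comp, eps_nat, G.hom_comp, ← E.assoc,
    eHom_comp_eq_of_heq (hGctx X.1) (hGctx Y.1) (hGhom X.1 Y.1 f.1), E.assoc]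
  rfl

end G
end CwFFree
namespace CwFFree

variable {M E : CwF.{u}} (F : CwFHom M E) (hM : Contextual M) (A : M.Ty M.one)
  (aPt : E.Hom E.one (F.ctx (M.ext M.one A)))
  (G : CwFHom (sliceCwF M (M.ext M.one A)) E)

lemma key_ind
    (aPtu : ∀ z' : E.Hom E.one (F.ctx (M.ext M.one A)),
      HEq (E.subt (F.tm (M.qq (A := A))) z')
        (E.subt (F.tm (M.qq (A := A))) aPt) → z' = aPt)
    (hGctx : ∀ Γ, G.ctx ((W hM (M.ext M.one A)).ctx Γ) = F.ctx Γ)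
    (hGhom : ∀ Γ Δ (f : M.Hom Γ Δ),
      HEq (G.hom ((W hM (M.ext M.one A)).hom f)) (F.hom f))
    (hGty : ∀ Γ (B : M.Ty Γ), HEq (G.ty ((W hM (M.ext M.one A)).ty B)) (F.ty B))
    (hGtm : ∀ Γ (B : M.Ty Γ) (b : M.Tm Γ B),
      HEq (G.tm ((W hM (M.ext M.one A)).tm b)) (F.tm b))
    (hGq : HEq (G.tm (Γ := ⟨M.ext M.one A, TeleOver.nil⟩) (A := M.subT A M.pp)
      M.qq) (E.subt (F.tm (M.qq (A := A))) aPt))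
    {Δc : M.Ctx} (t : TeleOver M (M.ext M.one A) Δc) :
    ∃ h : G.ctx ⟨Δc, t⟩ = obj F aPt t,
      rho F hM (M.ext M.one A) G hGctx ⟨Δc, t⟩
        = E.comp (real F aPt t) (eHom h) := by
  induction t with
  | nil =>
    have hO : G.ctx ⟨M.ext M.one A, TeleOver.nil⟩ = E.one := G.ctx_one
    refine ⟨hO, ?_⟩
    have hz : HEq (E.subt (F.tm (M.qq (A := A)))
        (E.comp (rho F hM (M.ext M.one A) G hGctx ⟨M.ext M.one A, TeleOver.nil⟩)
          (eHom hO.symm)))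
        (E.subt (F.tm (M.qq (A := A))) aPt) := by
      refine ((E.subt_comp _ _ _).trans ?_)
      refine (subt_eHom hO.symm _).trans ?_
      exact (Gtm_heq F hM G hGctx hGty hGtm ⟨M.ext M.one A, TeleOver.nil⟩
        (M.qq (A := A))).symm.trans hGq
    have hzz := aPtu _ hz
    calc rho F hM (M.ext M.one A) G hGctx ⟨M.ext M.one A, TeleOver.nil⟩
        = E.comp (E.comp (rho F hM (M.ext M.one A) G hGctx
            ⟨M.ext M.one A, TeleOver.nil⟩) (eHom hO.symm)) (eHom hO) :=
          (comp_eHom_symm_cancel hO _).symm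
      _ = E.comp aPt (eHom hO) := by rw [hzz]
  | @snoc Δc t B IH =>
    obtain ⟨h, hρ⟩ := IH
    have hq : HEq (G.ty (Γ := ⟨Δc, t⟩) B) (E.subT (F.ty B) (real F aPt t)) := by
      refine (heq_of_eq ?_).trans (subT_eHom h (E.subT (F.ty B) (real F aPt t)))
      rw [Gty_eq F hM G hGctx hGty ⟨Δc, t⟩ B, hρ, E.subT_comp]
    have eG : G.ctx ⟨M.ext Δc B, t.snoc B⟩
        = E.ext (G.ctx ⟨Δc, t⟩) (G.ty (Γ := ⟨Δc, t⟩) B) :=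
      G.ctx_ext (Γ := ⟨Δc, t⟩) B
    have h' : G.ctx ⟨M.ext Δc B, t.snoc B⟩ = obj F aPt (t.snoc B) :=
      eG.trans (ext_congr h hq)
    refine ⟨h', ?_⟩
    apply F_hom_ext F (B := B)
    · have n1 : E.comp (rho F hM (M.ext M.one A) G hGctx ⟨Δc, t⟩)
          (G.hom ((sliceCwF M (M.ext M.one A)).pp (Γ := ⟨Δc, t⟩) (A := B)))
          = E.comp (F.hom (M.pp (A := B)))
            (rho F hM (M.ext M.one A) G hGctx ⟨M.ext Δc B, t.snoc B⟩) :=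
        rho_nat F hM G hGctx hGhom
          ((sliceCwF M (M.ext M.one A)).pp (Γ := ⟨Δc, t⟩) (A := B))
      have hGp : G.hom ((sliceCwF M (M.ext M.one A)).pp (Γ := ⟨Δc, t⟩) (A := B))
          = E.comp (E.pp (A := G.ty (Γ := ⟨Δc, t⟩) B)) (eHom eG) :=
        eq_comp_eHom eG (G.hom_p (Γ := ⟨Δc, t⟩) B)
      have hmid : E.comp (eHom h) (E.comp (E.pp (A := G.ty (Γ := ⟨Δc, t⟩) B))
          (eHom eG)) = E.comp (E.pp (A := E.subT (F.ty B) (real F aPt t)))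
            (eHom h') := by
        refine eq_of_heq (((eHom_comp h _).trans ?_).trans
          (comp_eHom h' E.pp).symm)
        exact (comp_eHom eG E.pp).trans (pp_congr h hq)
      calc E.comp (F.hom (M.pp (A := B)))
            (rho F hM (M.ext M.one A) G hGctx ⟨M.ext Δc B, t.snoc B⟩)
          = E.comp (E.comp (real F aPt t) (eHom h))
              (E.comp (E.pp (A := G.ty (Γ := ⟨Δc, t⟩) B)) (eHom eG)) := by
            rw [← n1, hGp, hρ]; rfl
        _ = E.comp (real F aPt t) (E.comp (eHom h)
              (E.comp (E.pp (A := G.ty (Γ := ⟨Δc, t⟩) B)) (eHom eG))) :=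
            E.assoc _ _ _
        _ = E.comp (real F aPt t)
              (E.comp (E.pp (A := E.subT (F.ty B) (real F aPt t))) (eHom h')) := by
            rw [hmid]
        _ = E.comp (E.comp (real F aPt t) E.pp) (eHom h') := (E.assoc _ _ _).symm
        _ = E.comp (E.comp (F.hom (M.pp (A := B))) (real F aPt (t.snoc B)))
              (eHom h') := by rw [real_pp]; rfl
        _ = E.comp (F.hom (M.pp (A := B)))
              (E.comp (real F aPt (t.snoc B)) (eHom h')) := E.assoc _ _ _
    · refine HEq.trans ?_ (subt_comp_eHom_right h' (real F aPt (t.snoc B))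
        (F.tm (M.qq (A := B)))).symm
      refine HEq.trans ?_ (real_qq F aPt t B).symm
      refine HEq.trans ((Gtm_heq F hM G hGctx hGty hGtm
        ⟨M.ext Δc B, t.snoc B⟩ (M.qq (A := B))).symm.trans
          (G.tm_q (Γ := ⟨Δc, t⟩) B)) ?_
      exact qq_congr h hq

lemma unique_ext
    (aPtu : ∀ z' : E.Hom E.one (F.ctx (M.ext M.one A)),
      HEq (E.subt (F.tm (M.qq (A := A))) z')
        (E.subt (F.tm (M.qq (A := A))) aPt) → z' = aPt)
    (hGctx : ∀ Γ, G.ctx ((W hM (M.ext M.one A)).ctx Γ) = F.ctx Γ)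
    (hGhom : ∀ Γ Δ (f : M.Hom Γ Δ),
      HEq (G.hom ((W hM (M.ext M.one A)).hom f)) (F.hom f))
    (hGty : ∀ Γ (B : M.Ty Γ), HEq (G.ty ((W hM (M.ext M.one A)).ty B)) (F.ty B))
    (hGtm : ∀ Γ (B : M.Ty Γ) (b : M.Tm Γ B),
      HEq (G.tm ((W hM (M.ext M.one A)).tm b)) (F.tm b))
    (hGq : HEq (G.tm (Γ := ⟨M.ext M.one A, TeleOver.nil⟩) (A := M.subT A M.pp)
      M.qq) (E.subt (F.tm (M.qq (A := A))) aPt)) :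
    G = Ft F aPt := by
  apply CwFHom_ext
  · intro X; exact (key_ind F hM A aPt G aPtu hGctx hGhom hGty hGtm hGq X.2).choose
  · intro X Y f
    obtain ⟨XA, Xt⟩ := X
    obtain ⟨YA, Yt⟩ := Y
    obtain ⟨hX, hrX⟩ := key_ind F hM A aPt G aPtu hGctx hGhom hGty hGtm hGq Xt
    obtain ⟨hY, hrY⟩ := key_ind F hM A aPt G aPtu hGctx hGhom hGty hGtm hGq Yt
    refine heq_of_eHom_comp hX hY ?_
    have hspec : E.comp (real F aPt Yt) (FtHom F aPt f)
        = E.comp (F.hom f.1) (real F aPt Xt) := FtHom_spec F aPt f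
    apply real_mono F aPt Yt
    calc E.comp (real F aPt Yt) (E.comp (eHom hY) (G.hom f))
        = E.comp (E.comp (real F aPt Yt) (eHom hY)) (G.hom f) :=
          (E.assoc _ _ _).symm
      _ = E.comp (rho F hM (M.ext M.one A) G hGctx ⟨YA, Yt⟩) (G.hom f) := by
          rw [← hrY]
      _ = E.comp (F.hom f.1) (rho F hM (M.ext M.one A) G hGctx ⟨XA, Xt⟩) :=
          rho_nat F hM G hGctx hGhom f
      _ = E.comp (F.hom f.1) (E.comp (real F aPt Xt) (eHom hX)) := by rw [hrX]
      _ = E.comp (E.comp (F.hom f.1) (real F aPt Xt)) (eHom hX) :=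
          (E.assoc _ _ _).symm
      _ = E.comp (E.comp (real F aPt Yt) (FtHom F aPt f)) (eHom hX) := by
          rw [hspec]
      _ = E.comp (real F aPt Yt) (E.comp (FtHom F aPt f) (eHom hX)) :=
          E.assoc _ _ _
  · intro X B
    obtain ⟨XA, Xt⟩ := X
    obtain ⟨hX, hrX⟩ := key_ind F hM A aPt G aPtu hGctx hGhom hGty hGtm hGq Xt
    show HEq (G.ty B) (E.subT (F.ty B) (real F aPt Xt))
    refine (heq_of_eq ?_).trans (subT_eHom hX (E.subT (F.ty B) (real F aPt Xt)))
    rw [Gty_eq F hM G hGctx hGty ⟨XA, Xt⟩ B, hrX, E.subT_comp]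
  · intro X B b
    obtain ⟨XA, Xt⟩ := X
    obtain ⟨hX, hrX⟩ := key_ind F hM A aPt G aPtu hGctx hGhom hGty hGtm hGq Xt
    show HEq (G.tm b) (E.subt (F.tm b) (real F aPt Xt))
    refine (Gtm_heq F hM G hGctx hGty hGtm ⟨XA, Xt⟩ b).trans ?_
    rw [hrX]
    exact subt_comp_eHom_right hX (real F aPt Xt) (F.tm b)

end CwFFree
open CwFFree in
/-- Let `M` be a contextual CwF and `A` a closed type. Then the
contextual slice `M // (1.A)` is the free extension of `M` by a generic element
`q_A` of type `A`: there is a weakening morphism `p_A* : M → M // (1.A)` such that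
for every CwF `E`, CwF morphism `F : M → E` and element `a ∈ E.Tm(1_E, F(A))`,
there is a unique CwF morphism `F̃ : M // (1.A) → E` with `F̃ ∘ p_A* = F` (stated
componentwise) and `F̃(q_A) = a`. -/
theorem contextual_slice_free_extension (M : CwF.{u}) (hM : Contextual M)
    (A : M.Ty M.one) :
    ∃ W : CwFHom M (sliceCwF M (M.ext M.one A)),
      ∀ (E : CwF.{u}) (F : CwFHom M E) (a : E.Tm E.one (cast (congrArg E.Ty F.ctx_one) (F.ty A))),
        ∃! Ft : CwFHom (sliceCwF M (M.ext M.one A)) E,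
          (∀ Γ, Ft.ctx (W.ctx Γ) = F.ctx Γ) ∧
          (∀ (Γ Δ : M.Ctx) (f : M.Hom Γ Δ), HEq (Ft.hom (W.hom f)) (F.hom f)) ∧
          (∀ (Γ : M.Ctx) (B : M.Ty Γ), HEq (Ft.ty (W.ty B)) (F.ty B)) ∧
          (∀ (Γ : M.Ctx) (B : M.Ty Γ) (b : M.Tm Γ B), HEq (Ft.tm (W.tm b)) (F.tm b)) ∧
          HEq (Ft.tm (Γ := ⟨M.ext M.one A, TeleOver.nil⟩) (A := M.subT A M.pp)
            M.qq) a := by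
  classical
  refine ⟨CwFFree.W hM (M.ext M.one A), ?_⟩
  intro E F a
  obtain ⟨aPt, ha1, ha2⟩ := exists_aPt F A a
  refine ⟨Ft F aPt, ⟨?_, ?_, ?_, ?_, ?_⟩, ?_⟩
  · intro Γ
    exact (wk_obj_real F aPt (teleOf hM Γ)).choose
  · intro Γ Δ f
    obtain ⟨hΓ, hrΓ⟩ := wk_obj_real F aPt (teleOf hM Γ)
    obtain ⟨hΔ, hrΔ⟩ := wk_obj_real F aPt (teleOf hM Δ)
    have hsp : E.comp (real F aPt (wk (M.ext M.one A) (teleOf hM Δ)).tele)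
        (FtHom F aPt ((CwFFree.W hM (M.ext M.one A)).hom f))
        = E.comp (F.hom ((CwFFree.W hM (M.ext M.one A)).hom f).1)
          (real F aPt (wk (M.ext M.one A) (teleOf hM Γ)).tele) :=
      FtHom_spec F aPt ((CwFFree.W hM (M.ext M.one A)).hom f)
    refine heq_of_eHom_comp hΓ hΔ ?_
    refine Eq.trans (b := E.comp (F.hom (wk (M.ext M.one A) (teleOf hM Δ)).proj)
      (E.comp (F.hom ((CwFFree.W hM (M.ext M.one A)).hom f).1)
        (real F aPt (wk (M.ext M.one A) (teleOf hM Γ)).tele))) ?_ ?_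
    · exact (congrArg (fun x => E.comp x (FtHom F aPt ((CwFFree.W hM (M.ext M.one A)).hom f)))
        hrΔ).symm.trans ((E.assoc _ _ _).trans (congrArg (E.comp _) hsp))
    calc E.comp (F.hom (wk (M.ext M.one A) (teleOf hM Δ)).proj)
            (E.comp (F.hom ((CwFFree.W hM (M.ext M.one A)).hom f).1)
              (real F aPt (wk (M.ext M.one A) (teleOf hM Γ)).tele))
        = E.comp (E.comp (F.hom (wk (M.ext M.one A) (teleOf hM Δ)).proj)
            (F.hom ((CwFFree.W hM (M.ext M.one A)).hom f).1))
            (real F aPt (wk (M.ext M.one A) (teleOf hM Γ)).tele) :=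
          (E.assoc _ _ _).symm
      _ = E.comp (F.hom (M.comp (wk (M.ext M.one A) (teleOf hM Δ)).proj
            ((CwFFree.W hM (M.ext M.one A)).hom f).1))
            (real F aPt (wk (M.ext M.one A) (teleOf hM Γ)).tele) :=
          (congrArg (fun x => E.comp x _) (F.hom_comp _ _)).symm
      _ = E.comp (F.hom (M.comp f (wk (M.ext M.one A) (teleOf hM Γ)).proj))
            (real F aPt (wk (M.ext M.one A) (teleOf hM Γ)).tele) := by
          rw [W_hom_val_proj hM f]; rfl
      _ = E.comp (E.comp (F.hom f)
            (F.hom (wk (M.ext M.one A) (teleOf hM Γ)).proj))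
            (real F aPt (wk (M.ext M.one A) (teleOf hM Γ)).tele) := by
          rw [F.hom_comp]
      _ = E.comp (F.hom f)
            (E.comp (F.hom (wk (M.ext M.one A) (teleOf hM Γ)).proj)
              (real F aPt (wk (M.ext M.one A) (teleOf hM Γ)).tele)) :=
          E.assoc _ _ _
      _ = E.comp (F.hom f) (eHom hΓ) := by rw [hrΓ]
  · intro Γ B
    obtain ⟨hΓ, hrΓ⟩ := wk_obj_real F aPt (teleOf hM Γ)
    show HEq (E.subT (F.ty (M.subT B (wk (M.ext M.one A) (teleOf hM Γ)).proj))
      (real F aPt (wk (M.ext M.one A) (teleOf hM Γ)).tele)) (F.ty B)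
    refine (heq_of_eq ?_).trans (subT_eHom hΓ (F.ty B))
    rw [F.ty_sub, ← E.subT_comp, hrΓ]
  · intro Γ B b
    obtain ⟨hΓ, hrΓ⟩ := wk_obj_real F aPt (teleOf hM Γ)
    show HEq (E.subt (F.tm (M.subt b (wk (M.ext M.one A) (teleOf hM Γ)).proj))
      (real F aPt (wk (M.ext M.one A) (teleOf hM Γ)).tele)) (F.tm b)
    refine HEq.trans (subt_hcongr rfl (heq_of_eq (F.ty_sub B _))
      (F.tm_sub b _) HEq.rfl) ?_
    refine HEq.trans (E.subt_comp (F.tm b) _ _).symm ?_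
    rw [hrΓ]
    exact subt_eHom hΓ (F.tm b)
  · exact ha1
  · rintro G ⟨g1, g2, g3, g4, g5⟩
    exact unique_ext F hM A aPt G (fun z' h => ha2 z' (h.trans ha1)) g1 g2 g3 g4
      (g5.trans ha1.symm)
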